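/- Assume each v_i is strictly concave, and p is differentiable and non-decreasing on (0,∞) with p' non-negative and non-decreasing on (0,∞). Let P ⊆ P̂ be two finite populations of consumers, where the consumers in P have the same valuations in both populations. Let ξ (indexed by P) and ξ̂ (indexed by P̂) satisfy the Nash-equilibrium first-order conditions for the populations P and P̂ respectively, with positive total demands. Then the total demand does not decrease when the population grows: Σ_{i∈P} ξ_i ≤ Σ_{i∈P̂} ξ̂_i. -/
import Mathlib

open Finset Set

/-- With strictly concave valuations and a differentiable,
non-decreasing price with non-negative, non-decreasing derivative, the total
Nash-equilibrium demand does not decrease when the population grows from `P`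
to `P̂ ⊇ P`. -/
theorem statement_11
    (ι : Type*) (P Phat : Finset ι) (hPP : P ⊆ Phat)
    (v v' : ι → ℝ → ℝ)
    (hv_deriv : ∀ i x, HasDerivAt (v i) (v' i x) x)
    (hv_sconcave : ∀ i, StrictConcaveOn ℝ (Ici (0 : ℝ)) (v i))
    (hv_mono : ∀ i, MonotoneOn (v i) (Ici (0 : ℝ)))
    (hv0 : ∀ i, v i 0 = 0)
    (C p p' : ℝ → ℝ)
    (hC_diff : DifferentiableOn ℝ C (Ici (0 : ℝ)))
    (hC_sconvex : StrictConvexOn ℝ (Ici (0 : ℝ)) C)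
    (hC0 : C 0 = 0)
    (hCpos : ∀ g : ℝ, 0 < g → 0 < C g)
    (hp : ∀ g : ℝ, 0 < g → p g = C g / g)
    (hp_deriv : ∀ g : ℝ, 0 < g → HasDerivAt p (p' g) g)
    (hp_mono : MonotoneOn p (Ioi (0 : ℝ)))
    (hp'_nonneg : ∀ g : ℝ, 0 < g → 0 ≤ p' g)
    (hp'_mono : MonotoneOn p' (Ioi (0 : ℝ)))
    (ξ ξhat : ι → ℝ)
    (hξ_nonneg : ∀ i ∈ P, 0 ≤ ξ i)
    (hξ_pos : 0 < ∑ i ∈ P, ξ i)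
    (hξ_le : ∀ i ∈ P, v' i (ξ i) ≤ p (∑ j ∈ P, ξ j) + ξ i * p' (∑ j ∈ P, ξ j))
    (hξ_eq : ∀ i ∈ P, 0 < ξ i →
        v' i (ξ i) = p (∑ j ∈ P, ξ j) + ξ i * p' (∑ j ∈ P, ξ j))
    (hξhat_nonneg : ∀ i ∈ Phat, 0 ≤ ξhat i)
    (hξhat_pos : 0 < ∑ i ∈ Phat, ξhat i)
    (hξhat_le : ∀ i ∈ Phat,
        v' i (ξhat i) ≤ p (∑ j ∈ Phat, ξhat j) + ξhat i * p' (∑ j ∈ Phat, ξhat j))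
    (hξhat_eq : ∀ i ∈ Phat, 0 < ξhat i →
        v' i (ξhat i) = p (∑ j ∈ Phat, ξhat j) + ξhat i * p' (∑ j ∈ Phat, ξhat j)) :
    (∑ i ∈ P, ξ i) ≤ ∑ i ∈ Phat, ξhat i := by
  by_contra hlt
  push_neg at hlt
  set G := ∑ i ∈ P, ξ i with hG
  set Gh := ∑ i ∈ Phat, ξhat i with hGh
  -- derivative of v i is strictly antitone on Ici 0
  have hanti : ∀ i, ∀ a ∈ Ici (0:ℝ), ∀ b ∈ Ici (0:ℝ), a < b → v' i b < v' i a := by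
    intro i a ha b hb hab
    have h1 := (hv_sconcave i).lt_slope_of_hasDerivAt ha hb hab (hv_deriv i b)
    have h2 := (hv_sconcave i).slope_lt_of_hasDerivAt ha hb hab (hv_deriv i a)
    linarith
  have hGmem : G ∈ Ioi (0:ℝ) := hξ_pos
  have hGhmem : Gh ∈ Ioi (0:ℝ) := hξhat_pos
  have hple : p Gh ≤ p G := hp_mono hGhmem hGmem hlt.le
  have hp'le : p' Gh ≤ p' G := hp'_mono hGhmem hGmem hlt.le
  -- each ξ i ≤ ξhat i for i ∈ P
  have hkey : ∀ i ∈ P, ξ i ≤ ξhat i := by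
    intro i hi
    by_contra hgt
    push_neg at hgt
    have hxpos : 0 < ξ i := lt_of_le_of_lt (hξhat_nonneg i (hPP hi)) hgt
    have heq := hξ_eq i hi hxpos
    have hle := hξhat_le i (hPP hi)
    have hxh0 : (0:ℝ) ≤ ξhat i := hξhat_nonneg i (hPP hi)
    have hlt3 : v' i (ξ i) < v' i (ξhat i) := hanti i (ξhat i) hxh0 (ξ i) hxpos.le hgt
    have h4 : ξhat i * p' Gh ≤ ξ i * p' Gh :=
      mul_le_mul_of_nonneg_right hgt.le (hp'_nonneg Gh hξhat_pos)
    have h5 : ξ i * p' Gh ≤ ξ i * p' G := mul_le_mul_of_nonneg_left hp'le hxpos.le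
    linarith
  have : G ≤ Gh := by
    calc G = ∑ i ∈ P, ξ i := rfl
    _ ≤ ∑ i ∈ P, ξhat i := Finset.sum_le_sum hkey
    _ ≤ Gh := Finset.sum_le_sum_of_subset_of_nonneg hPP (fun i hi _ => hξhat_nonneg i hi)
  linarith
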